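/- Let p be a prime and r ≥ 1, and set s = ⌊(r−1)/2⌋. Then the number of nonzero squares in Z/p^rZ equals the sum over k from 0 to s of |U(p^{r−2k})^2|, where U(m)^2 is the set of squares of units of Z/mZ. -/

import Mathlib

/-- The set of squares of units of `ZMod n`. -/
def unitSquares (n : ℕ) : Set (ZMod n) :=
  {x | ∃ u : (ZMod n)ˣ, (u : ZMod n) ^ 2 = x}

/-- The set of nonzero squares of `ZMod n`. -/
def nonzeroSquares (n : ℕ) : Set (ZMod n) :=
  {x | x ≠ 0 ∧ ∃ y : ZMod n, y ^ 2 = x}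

/-- A (nonempty) sequence is an `A`-weighted zero-sum sequence. -/
def IsWeightedZeroSum {n k : ℕ} (A : Set (ZMod n)) (x : Fin k → ZMod n) : Prop :=
  0 < k ∧ ∃ w : Fin k → ZMod n, (∀ i, w i ∈ A) ∧ ∑ i, w i * x i = 0

/-- The sequence `x` has an `A`-weighted zero-sum subsequence. -/
def HasWZSSubseq {n k : ℕ} (A : Set (ZMod n)) (x : Fin k → ZMod n) : Prop :=
  ∃ I : Finset (Fin k), I.Nonempty ∧ ∃ w : Fin k → ZMod n,
    (∀ i ∈ I, w i ∈ A) ∧ ∑ i ∈ I, w i * x i = 0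

/-- The sequence `x` has an `A`-weighted zero-sum subsequence of consecutive terms. -/
def HasConsecWZS {n k : ℕ} (A : Set (ZMod n)) (x : Fin k → ZMod n) : Prop :=
  ∃ i j : Fin k, i ≤ j ∧ ∃ w : Fin k → ZMod n,
    (∀ t ∈ Finset.Icc i j, w t ∈ A) ∧ ∑ t ∈ Finset.Icc i j, w t * x t = 0

/-- `k` is admissible for the `A`-weighted Davenport constant of `ZMod n`. -/
def DConst (n : ℕ) (A : Set (ZMod n)) (k : ℕ) : Prop :=
  0 < k ∧ ∀ x : Fin k → ZMod n, HasWZSSubseq A x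

/-- `k` is admissible for the constant `C_A` of `ZMod n`. -/
def CConst (n : ℕ) (A : Set (ZMod n)) (k : ℕ) : Prop :=
  0 < k ∧ ∀ x : Fin k → ZMod n, HasConsecWZS A x

lemma ncard_biUnion_aux {α ι : Type*} (t : Finset ι) (f : ι → Set α)
    (hfin : ∀ i ∈ t, (f i).Finite)
    (hdisj : ∀ i ∈ t, ∀ j ∈ t, i ≠ j → Disjoint (f i) (f j)) :
    (⋃ i ∈ t, f i).ncard = ∑ i ∈ t, (f i).ncard := by
  classical
  induction t using Finset.cons_induction with
  | empty => simp
  | cons a t ha ih =>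
    have hU : (⋃ i ∈ Finset.cons a t ha, f i) = f a ∪ ⋃ i ∈ t, f i := by
      simp [Set.iUnion_or, Set.iUnion_union_distrib]
    have hfin' : ∀ i ∈ t, (f i).Finite := fun i hi => hfin i (Finset.mem_cons_of_mem hi)
    have hfinU : (⋃ i ∈ t, f i).Finite := Set.Finite.biUnion t.finite_toSet hfin'
    have hd : Disjoint (f a) (⋃ i ∈ t, f i) := by
      rw [Set.disjoint_iUnion_right]
      intro i
      rw [Set.disjoint_iUnion_right]
      intro hi
      exact hdisj a (Finset.mem_cons_self a t) i (Finset.mem_cons_of_mem hi)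
        (fun h => ha (h ▸ hi))
    rw [Finset.sum_cons, hU, Set.ncard_union_eq hd (hfin a (Finset.mem_cons_self a t)) hfinU,
      ih hfin' (fun i hi j hj => hdisj i (Finset.mem_cons_of_mem hi) j (Finset.mem_cons_of_mem hj))]

theorem stmt5 (p r : ℕ) (hp : p.Prime) (hr : 1 ≤ r) :
    (nonzeroSquares (p ^ r)).ncard =
      ∑ k ∈ Finset.range ((r - 1) / 2 + 1), (unitSquares (p ^ (r - 2 * k))).ncard := by
  classical
  haveI : NeZero (p ^ r) := ⟨pow_ne_zero _ hp.pos.ne'⟩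
  haveI : ∀ m, NeZero (p ^ (r - 2 * m)) := fun m => ⟨pow_ne_zero _ hp.pos.ne'⟩
  set s := (r - 1) / 2 with hs
  set S : ℕ → Set (ZMod (p ^ r)) := fun k =>
    (fun e : ZMod (p ^ (r - 2 * k)) => ((p ^ (2 * k) * e.val : ℕ) : ZMod (p ^ r))) ''
      unitSquares (p ^ (r - 2 * k)) with hSdef
  -- elements of unit squares have p-coprime val
  have hcopval : ∀ k, 2 * k + 1 ≤ r → ∀ e ∈ unitSquares (p ^ (r - 2 * k)), ¬ p ∣ e.val := by
    intro k hk e he hdvd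
    obtain ⟨u, hu⟩ := he
    have h1 : ((u ^ 2 : (ZMod (p ^ (r - 2 * k)))ˣ) : ZMod (p ^ (r - 2 * k))) = e := by
      rw [Units.val_pow_eq_pow_val, hu]
    have hcop := ZMod.val_coe_unit_coprime (u ^ 2)
    rw [h1] at hcop
    have hpq : p ∣ p ^ (r - 2 * k) := dvd_pow_self p (by omega)
    have hone : p ∣ 1 := hcop ▸ Nat.dvd_gcd hdvd hpq
    have := Nat.le_of_dvd one_pos hone
    have := hp.two_le
    omega
  -- forward inclusion
  have hfwd : ∀ x ∈ nonzeroSquares (p ^ r), ∃ k, 2 * k + 1 ≤ r ∧ x ∈ S k := by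
    intro x hx
    obtain ⟨hx0, y, hy⟩ := hx
    have hy0 : y ≠ 0 := by rintro rfl; simp at hy; exact hx0 hy.symm
    set n := y.val with hn
    have hn0 : n ≠ 0 := fun h => hy0 (ZMod.val_injective _ (by simpa [hn] using h))
    set a := n.factorization p with ha
    set m := n / p ^ a with hm
    have hnm : p ^ a * m = n := Nat.ordProj_mul_ordCompl_eq_self n p
    have hpm : ¬ p ∣ m := Nat.not_dvd_ordCompl hp hn0
    have hxn : x = ((p ^ (2 * a) * m ^ 2 : ℕ) : ZMod (p ^ r)) := by
      rw [← hy, ← ZMod.natCast_zmod_val y, ← hn, ← hnm]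
      push_cast
      ring
    have h2a : 2 * a < r := by
      by_contra h
      push_neg at h
      apply hx0
      rw [hxn, ZMod.natCast_eq_zero_iff]
      exact Dvd.dvd.mul_right (pow_dvd_pow p h) _
    refine ⟨a, by omega, ?_⟩
    have hcop : Nat.Coprime m (p ^ (r - 2 * a)) :=
      Nat.Coprime.pow_right _ ((Nat.Prime.coprime_iff_not_dvd hp).mpr hpm).symm
    set u := ZMod.unitOfCoprime m hcop with hu
    refine ⟨(u : ZMod (p ^ (r - 2 * a))) ^ 2, ⟨u, rfl⟩, ?_⟩
    have hucast : (u : ZMod (p ^ (r - 2 * a))) = (m : ZMod (p ^ (r - 2 * a))) :=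
      ZMod.coe_unitOfCoprime m hcop
    have hval : ((u : ZMod (p ^ (r - 2 * a))) ^ 2).val = m ^ 2 % p ^ (r - 2 * a) := by
      rw [hucast, ← Nat.cast_pow, ZMod.val_natCast]
    show ((p ^ (2 * a) * ((u : ZMod (p ^ (r - 2 * a))) ^ 2).val : ℕ) : ZMod (p ^ r)) = x
    rw [hval, hxn]
    rw [ZMod.natCast_eq_natCast_iff]
    have := (Nat.mod_modEq (m ^ 2) (p ^ (r - 2 * a))).mul_left' (c := p ^ (2 * a))
    rwa [← pow_add, show 2 * a + (r - 2 * a) = r by omega] at this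
  -- backward inclusion
  have hbwd : ∀ k, 2 * k + 1 ≤ r → ∀ e ∈ unitSquares (p ^ (r - 2 * k)),
      ((p ^ (2 * k) * e.val : ℕ) : ZMod (p ^ r)) ∈ nonzeroSquares (p ^ r) := by
    intro k hk e he
    have hcop := hcopval k hk e he
    obtain ⟨u, hu⟩ := he
    constructor
    · rw [Ne, ZMod.natCast_eq_zero_iff]
      intro hdvd
      rw [← show p ^ (2 * k) * p ^ (r - 2 * k) = p ^ r by rw [← pow_add]; congr 1; omega] at hdvd
      have := (Nat.mul_dvd_mul_iff_left (pow_pos hp.pos (2 * k))).mp hdvd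
      exact hcop (dvd_trans (dvd_pow_self p (by omega)) this)
    · refine ⟨((p ^ k * (u : ZMod (p ^ (r - 2 * k))).val : ℕ) : ZMod (p ^ r)), ?_⟩
      have h1 : e.val = (u : ZMod (p ^ (r - 2 * k))).val ^ 2 % p ^ (r - 2 * k) := by
        conv_lhs => rw [← hu, ← ZMod.natCast_zmod_val (u : ZMod (p ^ (r - 2 * k)))]
        rw [← Nat.cast_pow, ZMod.val_natCast]
      rw [h1, ← Nat.cast_pow, mul_pow, ← pow_mul, ZMod.natCast_eq_natCast_iff,
        show k * 2 = 2 * k by ring]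
      have h2 := (Nat.mod_modEq ((u : ZMod (p ^ (r - 2 * k))).val ^ 2)
        (p ^ (r - 2 * k))).mul_left' (c := p ^ (2 * k))
      rw [show p ^ (2 * k) * p ^ (r - 2 * k) = p ^ r by rw [← pow_add]; congr 1; omega] at h2
      exact h2.symm
  -- injectivity
  have hinj : ∀ k, 2 * k + 1 ≤ r → ∀ x y : ZMod (p ^ (r - 2 * k)),
      ((p ^ (2 * k) * x.val : ℕ) : ZMod (p ^ r)) = ((p ^ (2 * k) * y.val : ℕ) : ZMod (p ^ r)) →
      x = y := by
    intro k hk x y h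
    rw [ZMod.natCast_eq_natCast_iff] at h
    unfold Nat.ModEq at h
    rw [show p ^ r = p ^ (2 * k) * p ^ (r - 2 * k) by rw [← pow_add]; congr 1; omega,
      Nat.mul_mod_mul_left, Nat.mul_mod_mul_left] at h
    have h2 := Nat.eq_of_mul_eq_mul_left (pow_pos hp.pos (2 * k)) h
    rw [Nat.mod_eq_of_lt (ZMod.val_lt x), Nat.mod_eq_of_lt (ZMod.val_lt y)] at h2
    exact ZMod.val_injective _ h2
  -- disjointness core
  have hcore : ∀ k j : ℕ, k < j → 2 * j + 1 ≤ r → ∀ a b : ℕ, ¬ p ∣ a →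
      ((p ^ (2 * k) * a : ℕ) : ZMod (p ^ r)) = ((p ^ (2 * j) * b : ℕ) : ZMod (p ^ r)) → False := by
    intro k j hkj hjr a b hpa h
    rw [ZMod.natCast_eq_natCast_iff] at h
    have hd : ((p : ℤ) ^ r) ∣ ((p ^ (2 * j) * b : ℕ) : ℤ) - ((p ^ (2 * k) * a : ℕ) : ℤ) := by
      exact_mod_cast h.dvd
    have h2 : ((p : ℤ) ^ (2 * k + 1)) ∣ ((p ^ (2 * j) * b : ℕ) : ℤ) := by
      push_cast
      exact Dvd.dvd.mul_right (pow_dvd_pow _ (by omega)) _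
    have h3 : ((p : ℤ) ^ (2 * k + 1)) ∣ ((p ^ (2 * j) * b : ℕ) : ℤ) - ((p ^ (2 * k) * a : ℕ) : ℤ) :=
      dvd_trans (pow_dvd_pow _ (by omega)) hd
    have h1 : ((p : ℤ) ^ (2 * k + 1)) ∣ ((p ^ (2 * k) * a : ℕ) : ℤ) := by
      have := dvd_sub h2 h3
      simpa using this
    have h4 : (p : ℤ) ∣ (a : ℤ) := by
      rw [pow_succ] at h1
      push_cast at h1
      exact (mul_dvd_mul_iff_left (pow_ne_zero (2 * k) (by exact_mod_cast hp.pos.ne'))).mp h1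
    exact hpa (by exact_mod_cast h4)
  -- index bound translation
  have hkr : ∀ k, k ∈ Finset.range (s + 1) ↔ 2 * k + 1 ≤ r := by
    intro k
    rw [Finset.mem_range, hs]
    omega
  -- set equality
  have hS : nonzeroSquares (p ^ r) = ⋃ k ∈ Finset.range (s + 1), S k := by
    ext x
    simp only [Set.mem_iUnion, exists_prop]
    constructor
    · intro hx
      obtain ⟨k, hk, hmem⟩ := hfwd x hx
      exact ⟨k, (hkr k).mpr hk, hmem⟩
    · rintro ⟨k, hk, e, he, rfl⟩
      exact hbwd k ((hkr k).mp hk) e he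
  -- disjointness of the pieces
  have hdisj : ∀ k ∈ Finset.range (s + 1), ∀ j ∈ Finset.range (s + 1), k ≠ j →
      Disjoint (S k) (S j) := by
    intro k hk j hj hne
    rw [Set.disjoint_left]
    rintro z ⟨e, he, hez⟩ ⟨e', he', he'z⟩
    rcases lt_or_gt_of_ne hne with hlt | hgt
    · exact hcore k j hlt ((hkr j).mp hj) e.val e'.val
        (hcopval k ((hkr k).mp hk) e he) (hez.trans he'z.symm)
    · exact hcore j k hgt ((hkr k).mp hk) e'.val e.val
        (hcopval j ((hkr j).mp hj) e' he') (he'z.trans hez.symm)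
  rw [hS, ncard_biUnion_aux _ _ (fun i _ => Set.toFinite _) hdisj]
  refine Finset.sum_congr rfl fun k hk => ?_
  exact Set.ncard_image_of_injOn fun x _ y _ h => hinj k ((hkr k).mp hk) x y h
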